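/- Let G be a finite simple graph. Then the total number of nonempty cliques of G (i.e., the number of complete subgraphs K_t over all t ≥ 1) satisfies ∑_{t ≥ 1} N(G,K_t) ≤ ∑_{v ∈ V(G)} (2^{d(v)+1} − 1)/(d(v)+1). -/

import Mathlib

open SimpleGraph Finset

lemma powerset_inv_sum {α : Type*} [DecidableEq α] (A : Finset α) :
    ∑ T ∈ A.powerset, (1 : ℚ) / (T.card + 1) = (2 ^ (A.card + 1) - 1) / (A.card + 1) := by
  rw [Finset.sum_powerset]
  have h1 : ∀ j ∈ Finset.range (A.card + 1),
      ∑ T ∈ Finset.powersetCard j A, (1 : ℚ) / (T.card + 1)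
        = ((A.card + 1).choose (j+1) : ℚ) / (A.card + 1) := by
    intro j hj
    rw [Finset.sum_congr rfl (fun T hT => by
      rw [(Finset.mem_powersetCard.mp hT).2]), Finset.sum_const, Finset.card_powersetCard,
      nsmul_eq_mul]
    have h := Nat.add_one_mul_choose_eq A.card j
    have hj1 : ((j:ℚ)+1) ≠ 0 := by positivity
    have hn1 : ((A.card:ℚ)+1) ≠ 0 := by positivity
    rw [mul_one_div, div_eq_div_iff hj1 hn1]
    have h' : ((A.card:ℚ)+1) * A.card.choose j = ((A.card+1).choose (j+1) : ℚ) * (j+1) := by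
      exact_mod_cast h
    linear_combination h'
  rw [Finset.sum_congr rfl h1, ← Finset.sum_div]
  congr 1
  have h2 := Nat.sum_range_choose (A.card + 1)
  rw [Finset.sum_range_succ' _ (A.card + 1)] at h2
  have : (∑ j ∈ Finset.range (A.card + 1), ((A.card + 1).choose (j+1) : ℚ))
      = ((∑ j ∈ Finset.range (A.card + 1), (A.card + 1).choose (j+1) : ℕ) : ℚ) := by push_cast; ring
  rw [this]
  have : ∑ j ∈ Finset.range (A.card + 1), (A.card + 1).choose (j+1) = 2 ^ (A.card + 1) - 1 := by
    rw [Nat.choose_zero_right] at h2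
    omega
  rw [this]
  have : (1:ℕ) ≤ 2 ^ (A.card + 1) := Nat.one_le_two_pow
  push_cast [this]
  ring

theorem stmt_2 {V : Type*} [Fintype V] [DecidableEq V] (G : SimpleGraph V)
    [DecidableRel G.Adj] :
    ((Set.ncard {s : Finset V | s.Nonempty ∧ G.IsClique ↑s} : ℕ) : ℚ) ≤
      ∑ v : V, ((2 ^ (G.degree v + 1) - 1 : ℚ) / (G.degree v + 1)) := by
  classical
  set S : Finset (Finset V) := Finset.univ.filter (fun s => s.Nonempty ∧ G.IsClique ↑s) with hS
  have hset : {s : Finset V | s.Nonempty ∧ G.IsClique ↑s} = ↑S := by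
    ext s; simp [hS]
  rw [hset, Set.ncard_coe_finset]
  have key : (S.card : ℚ) = ∑ v : V, ∑ s ∈ S.filter (fun s => v ∈ s), (1 : ℚ) / s.card := by
    rw [Finset.card_eq_sum_ones, Nat.cast_sum]
    have h1 : ∀ s ∈ S, ((1:ℕ) : ℚ) = ∑ v ∈ s, (1:ℚ)/s.card := by
      intro s hs
      have hne : s.Nonempty := (Finset.mem_filter.mp hs).2.1
      have hcard : (s.card : ℚ) ≠ 0 := by
        exact_mod_cast Finset.card_ne_zero_of_mem hne.choose_spec
      rw [Finset.sum_const, nsmul_eq_mul]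
      field_simp
      norm_num
    rw [Finset.sum_congr rfl h1]
    calc ∑ s ∈ S, ∑ v ∈ s, (1:ℚ)/s.card
        = ∑ s ∈ S, ∑ v ∈ Finset.univ, (if v ∈ s then (1:ℚ)/s.card else 0) := by
          refine Finset.sum_congr rfl fun s _ => ?_
          rw [Finset.sum_ite_mem, Finset.univ_inter]
      _ = ∑ v ∈ Finset.univ, ∑ s ∈ S, (if v ∈ s then (1:ℚ)/s.card else 0) := Finset.sum_comm
      _ = ∑ v : V, ∑ s ∈ S.filter (fun s => v ∈ s), (1:ℚ)/s.card := by
          exact Finset.sum_congr rfl fun v _ => (Finset.sum_filter _ _).symm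
  rw [key]
  refine Finset.sum_le_sum fun v _ => ?_
  -- per-vertex bound
  set S' := S.filter (fun s => v ∈ s) with hS'
  have hc : ∀ s ∈ S', (1:ℚ)/(s.card) = 1/((s.erase v).card + 1) := by
    intro s hs
    have hv : v ∈ s := (Finset.mem_filter.mp hs).2
    have h : (s.erase v).card + 1 = s.card := by
      rw [Finset.card_erase_of_mem hv]
      have := Finset.card_pos.mpr ⟨v, hv⟩
      omega
    rw [← h]
    push_cast
    ring
  rw [Finset.sum_congr rfl hc]
  have hinj : ∀ a ∈ S', ∀ b ∈ S', a.erase v = b.erase v → a = b := by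
    intro a ha b hb hab
    have hva : v ∈ a := (Finset.mem_filter.mp ha).2
    have hvb : v ∈ b := (Finset.mem_filter.mp hb).2
    rw [← Finset.insert_erase hva, ← Finset.insert_erase hvb, hab]
  have himg := Finset.sum_image (s := S') (g := fun s => s.erase v)
    (f := fun T : Finset V => (1:ℚ)/((T.card : ℚ) + 1)) hinj
  rw [← himg]
  have hsub : S'.image (fun s => s.erase v) ⊆ (G.neighborFinset v).powerset := by
    intro T hT
    rcases Finset.mem_image.mp hT with ⟨s, hs, rfl⟩
    have hv : v ∈ s := (Finset.mem_filter.mp hs).2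
    have hcl : G.IsClique ↑s := (Finset.mem_filter.mp (Finset.mem_filter.mp hs).1).2.2
    rw [Finset.mem_powerset]
    intro u hu
    rw [SimpleGraph.mem_neighborFinset]
    exact (hcl hv (Finset.mem_of_mem_erase hu) (Finset.ne_of_mem_erase hu).symm)
  calc ∑ T ∈ S'.image (fun s => s.erase v), (1:ℚ)/(T.card + 1)
      ≤ ∑ T ∈ (G.neighborFinset v).powerset, (1:ℚ)/(T.card + 1) := by
        refine Finset.sum_le_sum_of_subset_of_nonneg hsub fun T _ _ => by positivity
    _ = (2 ^ (G.degree v + 1) - 1) / (G.degree v + 1) := by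
        rw [powerset_inv_sum, G.card_neighborFinset_eq_degree]
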